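/- Let d ≥ 1, let f : ℝ^d → ℝ be differentiable, and let φ : ℝ^d → ℝ be a convex differentiable function. Assume: (a) ‖∇f(x)‖ → ∞ as ‖x‖ → ∞; (b) limsup_{‖x‖→∞} ‖∇f(x)‖/‖x‖ < ∞; (c) liminf_{‖x‖→∞} ⟨∇f(x), x⟩/(‖∇f(x)‖·‖x‖) > 0; and (d) the limit lim_{‖x‖→∞} ‖∇φ(x)‖/‖∇f(x)‖ exists and is strictly less than 1. Then the function U = f + φ satisfies all three of: (i) ‖∇U(x)‖ → ∞ as ‖x‖ → ∞; (ii) liminf_{‖x‖→∞} ⟨∇U(x), x⟩/(‖∇U(x)‖·‖x‖) > 0; and (iii) limsup_{‖x‖→∞} ‖∇U(x)‖/‖x‖ < ∞. -/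

import Mathlib

open Filter

section aux
variable {E : Type*} [NormedAddCommGroup E] [InnerProductSpace ℝ E] [CompleteSpace E]

lemma myGradAdd (f g : E → ℝ) (hf : Differentiable ℝ f) (hg : Differentiable ℝ g) (x : E) :
    gradient (fun y => f y + g y) x = gradient f x + gradient g x := by
  unfold gradient
  rw [fderiv_fun_add (hf x) (hg x), map_add]

lemma myInnerGradFderiv (f : E → ℝ) (x v : E) :
    (inner ℝ (gradient f x) v : ℝ) = fderiv ℝ f x v :=
  InnerProductSpace.toDual_symm_apply

lemma myConvexGradMono (φ : E → ℝ) (hφ : Differentiable ℝ φ) (hc : ConvexOn ℝ Set.univ φ)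
    (x : E) : (inner ℝ (gradient φ (0:E)) x : ℝ) ≤ inner ℝ (gradient φ x) x := by
  set L : ℝ →ᵃ[ℝ] E := (LinearMap.toSpanSingleton ℝ E x).toAffineMap with hL
  have hg : ConvexOn ℝ Set.univ (φ ∘ L) := by
    simpa using hc.comp_affineMap L
  have hderiv : ∀ t : ℝ, HasDerivAt (φ ∘ L) ((inner ℝ (gradient φ (t • x)) x : ℝ)) t := by
    intro t
    have h1 : HasDerivAt (fun t : ℝ => t • x) x t := by
      simpa using (hasDerivAt_id t).smul_const x
    have h2 := (hφ (t • x)).hasFDerivAt.comp_hasDerivAt t h1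
    rw [myInnerGradFderiv]
    exact h2
  have hmono := hg.monotoneOn_deriv (fun t _ => (hderiv t).differentiableAt)
    (Set.mem_univ (0:ℝ)) (Set.mem_univ (1:ℝ)) zero_le_one
  rw [(hderiv 0).deriv, (hderiv 1).deriv] at hmono
  simpa using hmono

end aux

/-- The filter of sets `{x : ‖x‖ ≥ R}`, `R → ∞`. -/
noncomputable def normAtTop (d : ℕ) : Filter (EuclideanSpace ℝ (Fin d)) :=
  Filter.comap (fun x => ‖x‖) Filter.atTop

set_option maxHeartbeats 800000 in
theorem stmt0 (d : ℕ) (hd : 1 ≤ d)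
    (f φ : EuclideanSpace ℝ (Fin d) → ℝ)
    (hf : Differentiable ℝ f) (hφ : Differentiable ℝ φ)
    (hφconv : ConvexOn ℝ Set.univ φ)
    (ha : Tendsto (fun x => ‖gradient f x‖) (normAtTop d) atTop)
    (hb : Filter.limsup (fun x => ((‖gradient f x‖ / ‖x‖ : ℝ) : EReal)) (normAtTop d) < ⊤)
    (hc : (0 : EReal) < Filter.liminf
      (fun x => (((inner ℝ (gradient f x) x : ℝ) / (‖gradient f x‖ * ‖x‖) : ℝ) : EReal))
      (normAtTop d))
    (hd' : ∃ c : ℝ, c < 1 ∧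
      Tendsto (fun x => ‖gradient φ x‖ / ‖gradient f x‖) (normAtTop d) (nhds c)) :
    Tendsto (fun x => ‖gradient (fun y => f y + φ y) x‖) (normAtTop d) atTop ∧
    (0 : EReal) < Filter.liminf
      (fun x => (((inner ℝ (gradient (fun y => f y + φ y) x) x : ℝ)
        / (‖gradient (fun y => f y + φ y) x‖ * ‖x‖) : ℝ) : EReal)) (normAtTop d) ∧
    Filter.limsup (fun x => ((‖gradient (fun y => f y + φ y) x‖ / ‖x‖ : ℝ) : EReal))
      (normAtTop d) < ⊤ := by
  classical
  set l := normAtTop d with hl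
  obtain ⟨c, hc1, hlim⟩ := hd'
  set c₁ : ℝ := max ((1 + c) / 2) (1 / 2) with hc₁def
  have hc₁0 : 0 < c₁ := lt_of_lt_of_le (by norm_num) (le_max_right _ _)
  have hc₁1 : c₁ < 1 := max_lt (by linarith) (by norm_num)
  have hU : ∀ x, gradient (fun y => f y + φ y) x = gradient f x + gradient φ x :=
    fun x => myGradAdd f φ hf hφ x
  -- eventual facts
  have hlnorm : Tendsto (fun x : EuclideanSpace ℝ (Fin d) => ‖x‖) l atTop := tendsto_comap
  have Ex1 : ∀ᶠ x in l, (1 : ℝ) ≤ ‖x‖ := hlnorm.eventually_ge_atTop 1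
  have Ef1 : ∀ᶠ x in l, (1 : ℝ) ≤ ‖gradient f x‖ := ha.eventually_ge_atTop 1
  have Eratio : ∀ᶠ x in l, ‖gradient φ x‖ / ‖gradient f x‖ < c₁ :=
    hlim.eventually_lt_const (lt_of_lt_of_le (by linarith : c < (1 + c) / 2) (le_max_left _ _))
  have E2 : ∀ᶠ x in l, ‖gradient φ x‖ ≤ c₁ * ‖gradient f x‖ := by
    filter_upwards [Eratio, Ef1] with x h1 h2
    have hpos : (0 : ℝ) < ‖gradient f x‖ := by linarith
    rw [div_lt_iff₀ hpos] at h1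
    linarith
  -- ε from liminf
  obtain ⟨b, hb0, hbl⟩ := exists_between hc
  have hbt : b ≠ ⊤ := (lt_of_lt_of_le hbl le_top).ne
  have hbb : b ≠ ⊥ := (lt_trans (by norm_num : (⊥ : EReal) < 0) hb0).ne'
  set ε : ℝ := b.toReal with hεdef
  have hbε : (ε : EReal) = b := EReal.coe_toReal hbt hbb
  have hε0 : 0 < ε := EReal.coe_pos.mp (hbε ▸ hb0)
  have E4 : ∀ᶠ x in l, ε < (inner ℝ (gradient f x) x : ℝ) / (‖gradient f x‖ * ‖x‖) := by
    have := eventually_lt_of_lt_liminf hbl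
    filter_upwards [this] with x hx
    rw [← hbε] at hx
    exact_mod_cast hx
  -- M from limsup
  obtain ⟨B, hBl, hBt⟩ := exists_between hb
  have hBb : B ≠ ⊥ := (lt_of_le_of_lt bot_le hBl).ne'
  set M : ℝ := B.toReal with hMdef
  have hBM : (M : EReal) = B := EReal.coe_toReal hBt.ne hBb
  have E3 : ∀ᶠ x in l, ‖gradient f x‖ / ‖x‖ < M := by
    have := eventually_lt_of_limsup_lt hBl
    filter_upwards [this] with x hx
    rw [← hBM] at hx
    exact_mod_cast hx
  -- convexity bound
  set K : ℝ := ‖gradient φ (0 : EuclideanSpace ℝ (Fin d))‖ with hKdef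
  have E5 : ∀ x : EuclideanSpace ℝ (Fin d),
      -(K * ‖x‖) ≤ (inner ℝ (gradient φ x) x : ℝ) := by
    intro x
    have h1 := myConvexGradMono φ hφ hφconv x
    have h2 : |(inner ℝ (gradient φ (0 : EuclideanSpace ℝ (Fin d))) x : ℝ)| ≤ K * ‖x‖ :=
      abs_real_inner_le_norm _ _
    have := neg_abs_le (inner ℝ (gradient φ (0 : EuclideanSpace ℝ (Fin d))) x : ℝ)
    linarith
  have E6 : ∀ᶠ x in l, 2 * K / ε ≤ ‖gradient f x‖ := ha.eventually_ge_atTop _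
  -- (i)
  have goal1 : Tendsto (fun x => ‖gradient (fun y => f y + φ y) x‖) l atTop := by
    refine tendsto_atTop_mono' l ?_ (ha.const_mul_atTop (by linarith : (0:ℝ) < 1 - c₁))
    filter_upwards [E2] with x h2
    rw [hU x]
    have := norm_le_add_norm_add (gradient f x) (gradient φ x)
    linarith
  -- common bound: ‖∇U‖ ≤ (1+c₁)‖∇f‖
  have EUup : ∀ᶠ x in l, ‖gradient (fun y => f y + φ y) x‖ ≤ (1 + c₁) * ‖gradient f x‖ := by
    filter_upwards [E2] with x h2
    rw [hU x]
    have := norm_add_le (gradient f x) (gradient φ x)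
    linarith
  -- (iii)
  have goal3 : Filter.limsup (fun x => ((‖gradient (fun y => f y + φ y) x‖ / ‖x‖ : ℝ) : EReal))
      l < ⊤ := by
    have hle : Filter.limsup (fun x => ((‖gradient (fun y => f y + φ y) x‖ / ‖x‖ : ℝ) : EReal))
        l ≤ (((1 + c₁) * M : ℝ) : EReal) := by
      apply limsup_le_of_le
      · isBoundedDefault
      · filter_upwards [EUup, E3, Ex1] with x h1 h3 hx1
        have hxpos : (0 : ℝ) < ‖x‖ := by linarith
        have : ‖gradient (fun y => f y + φ y) x‖ / ‖x‖ ≤ (1 + c₁) * M := by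
          rw [div_le_iff₀ hxpos]
          have h3' : ‖gradient f x‖ ≤ M * ‖x‖ := by
            rw [div_lt_iff₀ hxpos] at h3; linarith
          nlinarith [norm_nonneg (gradient f x)]
        exact_mod_cast this
    exact lt_of_le_of_lt hle (EReal.coe_lt_top _)
  -- (ii)
  have goal2 : (0 : EReal) < Filter.liminf
      (fun x => (((inner ℝ (gradient (fun y => f y + φ y) x) x : ℝ)
        / (‖gradient (fun y => f y + φ y) x‖ * ‖x‖) : ℝ) : EReal)) l := by
    set δ : ℝ := ε / (2 * (1 + c₁)) with hδdef
    have hδ0 : 0 < δ := div_pos hε0 (by linarith)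
    have hge : ∀ᶠ x in l, (δ : EReal) ≤
        (((inner ℝ (gradient (fun y => f y + φ y) x) x : ℝ)
          / (‖gradient (fun y => f y + φ y) x‖ * ‖x‖) : ℝ) : EReal) := by
      filter_upwards [E2, E4, E6, Ef1, Ex1, EUup] with x h2 h4 h6 hf1 hx1 hUup
      have hinner : (inner ℝ (gradient (fun y => f y + φ y) x) x : ℝ)
          = (inner ℝ (gradient f x) x : ℝ) + (inner ℝ (gradient φ x) x : ℝ) := by
        rw [hU x, inner_add_left]
      have hlow : (1 - c₁) * ‖gradient f x‖ ≤ ‖gradient (fun y => f y + φ y) x‖ := by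
        rw [hU x]
        have := norm_le_add_norm_add (gradient f x) (gradient φ x)
        linarith
      have hφlb := E5 x
      -- abstract to real arithmetic
      set a : ℝ := ‖gradient f x‖ with ha'
      set n : ℝ := ‖x‖ with hn'
      set u : ℝ := ‖gradient (fun y => f y + φ y) x‖ with hu'
      set I : ℝ := (inner ℝ (gradient (fun y => f y + φ y) x) x : ℝ) with hI'
      set J : ℝ := (inner ℝ (gradient f x) x : ℝ) with hJ'
      set P : ℝ := (inner ℝ (gradient φ x) x : ℝ) with hP'
      have hxpos : (0 : ℝ) < n := by linarith
      have hfpos : (0 : ℝ) < a := by linarith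
      have h4' : ε * (a * n) < J := by
        rw [lt_div_iff₀ (by positivity)] at h4; linarith
      have hKε : K * n ≤ (ε / 2) * a * n := by
        have h7 : 2 * K ≤ ε * a := by
          rw [div_le_iff₀ hε0] at h6; linarith only [h6]
        have h8 : K ≤ (ε / 2) * a := by linarith only [h7]
        exact mul_le_mul_of_nonneg_right h8 hxpos.le
      have hnum : (ε / 2) * a * n ≤ I := by
        rw [hinner]; linarith only [h4', hKε, hφlb]
      have hupos : (0 : ℝ) < u := by
        have h9 : (0:ℝ) < (1 - c₁) * a := mul_pos (by linarith only [hc₁1]) hfpos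
        linarith only [h9, hlow]
      have hUpos : (0 : ℝ) < u * n := mul_pos hupos hxpos
      have hfinal : δ ≤ I / (u * n) := by
        rw [le_div_iff₀ hUpos]
        have hδc : δ * (1 + c₁) = ε / 2 := by
          rw [hδdef]; field_simp
        have hstep : δ * (u * n) ≤ δ * ((1 + c₁) * a * n) := by
          have h10 : u * n ≤ (1 + c₁) * a * n := mul_le_mul_of_nonneg_right hUup hxpos.le
          exact mul_le_mul_of_nonneg_left h10 hδ0.le
        calc δ * (u * n) ≤ δ * ((1 + c₁) * a * n) := hstep
          _ = (ε / 2) * a * n := by rw [← hδc]; ring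
          _ ≤ I := hnum
      exact_mod_cast hfinal
    have hliminf := le_liminf_of_le (by isBoundedDefault) hge
    calc (0 : EReal) < (δ : EReal) := by exact_mod_cast hδ0
      _ ≤ _ := hliminf
  exact ⟨goal1, goal2, goal3⟩
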